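/- If P(q) = (q - α₁) * (q - α₂) * ⋯ * (q - αₙ) with α₁,…,αₙ ∈ ℍ, then α₁ is a zero of P, and every zero of P lies in [α₁] ∪ [α₂] ∪ ⋯ ∪ [αₙ], where [α] denotes the conjugacy class of α. -/

import Mathlib

open Quaternion Polynomial

/-- Evaluation of a quaternionic polynomial with coefficients written on the right. -/
noncomputable def qeval (P : Polynomial ℍ[ℝ]) (q : ℍ[ℝ]) : ℍ[ℝ] :=
  P.sum fun n a => q ^ n * a

/-- The conjugacy class (2-sphere) of a quaternion. -/
def conjClass (α : ℍ[ℝ]) : Set ℍ[ℝ] :=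
  {x | ∃ r : ℍ[ℝ], r ≠ 0 ∧ x = r⁻¹ * α * r}

lemma qeval_add (A B : Polynomial ℍ[ℝ]) (q : ℍ[ℝ]) :
    qeval (A + B) q = qeval A q + qeval B q := by
  unfold qeval
  exact Polynomial.sum_add_index A B _ (by simp) (by intro a b c; rw [mul_add])

lemma qeval_neg (A : Polynomial ℍ[ℝ]) (q : ℍ[ℝ]) : qeval (-A) q = -qeval A q := by
  unfold qeval
  rw [Polynomial.sum_def, Polynomial.sum_def, Polynomial.support_neg, ← Finset.sum_neg_distrib]
  simp

lemma qeval_sub (A B : Polynomial ℍ[ℝ]) (q : ℍ[ℝ]) :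
    qeval (A - B) q = qeval A q - qeval B q := by
  rw [sub_eq_add_neg, qeval_add, qeval_neg, sub_eq_add_neg]

lemma qeval_C (a q : ℍ[ℝ]) : qeval (C a) q = a := by
  unfold qeval
  rw [Polynomial.sum_C_index (by simp)]
  simp

lemma qeval_X (q : ℍ[ℝ]) : qeval X q = q := by
  unfold qeval
  rw [Polynomial.sum_X_index (by simp)]
  simp

lemma qeval_one (q : ℍ[ℝ]) : qeval 1 q = 1 := by
  simpa using qeval_C 1 q

lemma qeval_X_sub_C (a q : ℍ[ℝ]) : qeval (X - C a) q = q - a := by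
  rw [qeval_sub, qeval_C, qeval_X]

lemma qeval_range (P : Polynomial ℍ[ℝ]) (q : ℍ[ℝ]) (N : ℕ) (h : P.natDegree < N) :
    qeval P q = ∑ i ∈ Finset.range N, q ^ i * P.coeff i := by
  unfold qeval
  exact Polynomial.sum_over_range' P (by simp) N h

lemma qeval_mul_C (P : Polynomial ℍ[ℝ]) (b q : ℍ[ℝ]) :
    qeval (P * C b) q = qeval P q * b := by
  rw [qeval_range (P * C b) q (P.natDegree + 1)
      (lt_of_le_of_lt (Polynomial.natDegree_mul_C_le P b) (Nat.lt_succ_self _)),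
    qeval_range P q (P.natDegree + 1) (Nat.lt_succ_self _), Finset.sum_mul]
  simp [Polynomial.coeff_mul_C, mul_assoc]

lemma qeval_mul_X (P : Polynomial ℍ[ℝ]) (q : ℍ[ℝ]) :
    qeval (P * X) q = q * qeval P q := by
  have hd : (P * X).natDegree < P.natDegree + 2 := by
    have := Polynomial.natDegree_mul_le (p := P) (q := (X : Polynomial ℍ[ℝ]))
    simp only [Polynomial.natDegree_X] at this
    omega
  rw [qeval_range (P * X) q (P.natDegree + 2) hd,
    qeval_range P q (P.natDegree + 1) (Nat.lt_succ_self _), Finset.mul_sum]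
  rw [Finset.sum_range_succ']
  simp only [Polynomial.coeff_mul_X, Polynomial.coeff_mul_X_zero, mul_zero, add_zero,
    pow_succ', mul_assoc]

lemma qeval_mul_X_pow (P : Polynomial ℍ[ℝ]) (j : ℕ) (q : ℍ[ℝ]) :
    qeval (P * X ^ j) q = q ^ j * qeval P q := by
  induction j with
  | zero => simp
  | succ n ih =>
      rw [pow_succ, ← mul_assoc, qeval_mul_X, ih, ← mul_assoc, ← pow_succ']

lemma qeval_mul_monomial (P : Polynomial ℍ[ℝ]) (j : ℕ) (b q : ℍ[ℝ]) :
    qeval (P * Polynomial.monomial j b) q = q ^ j * qeval P q * b := by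
  rw [← Polynomial.C_mul_X_pow_eq_monomial, ← Polynomial.X_pow_mul, ← mul_assoc,
    qeval_mul_C, qeval_mul_X_pow]

lemma qeval_mul (P Q : Polynomial ℍ[ℝ]) (q : ℍ[ℝ]) :
    qeval (P * Q) q = Q.sum fun j b => q ^ j * qeval P q * b := by
  induction Q using Polynomial.induction_on' with
  | add A B hA hB =>
      rw [mul_add, qeval_add, hA, hB,
        Polynomial.sum_add_index A B _ (by simp) (by intro a b c; rw [mul_add])]
  | monomial n a =>
      rw [qeval_mul_monomial, Polynomial.sum_monomial_index _ _ (by simp)]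

lemma qeval_mul_of_zero (P Q : Polynomial ℍ[ℝ]) (q : ℍ[ℝ]) (h : qeval P q = 0) :
    qeval (P * Q) q = 0 := by
  rw [qeval_mul, h]
  simp [Polynomial.sum_def]

lemma conjPowAux (p q : ℍ[ℝ]) (h : p ≠ 0) (n : ℕ) :
    (p⁻¹ * q * p) ^ n = p⁻¹ * q ^ n * p := by
  induction n with
  | zero => simp [inv_mul_cancel₀ h]
  | succ m ihm =>
      rw [pow_succ, ihm, pow_succ]
      simp only [mul_assoc, mul_inv_cancel_left₀ h]

lemma qeval_mul_of_ne_zero (P Q : Polynomial ℍ[ℝ]) (q : ℍ[ℝ]) (h : qeval P q ≠ 0) :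
    qeval (P * Q) q = qeval P q * qeval Q ((qeval P q)⁻¹ * q * qeval P q) := by
  have key : ∀ n : ℕ, q ^ n * qeval P q
      = qeval P q * ((qeval P q)⁻¹ * q * qeval P q) ^ n := by
    intro n
    rw [conjPowAux _ _ h, ← mul_assoc, ← mul_assoc, mul_inv_cancel₀ h, one_mul]
  have hQ : qeval Q ((qeval P q)⁻¹ * q * qeval P q)
      = Q.sum fun n a => ((qeval P q)⁻¹ * q * qeval P q) ^ n * a := rfl
  rw [qeval_mul, hQ, Polynomial.sum_def, Polynomial.sum_def, Finset.mul_sum]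
  refine Finset.sum_congr rfl fun n _ => ?_
  rw [key n, mul_assoc]

theorem gauss_lucas_main (l : List ℍ[ℝ]) (hl : l ≠ []) :
    qeval ((l.map fun α => X - C α).prod) (l.head hl) = 0 ∧
      ∀ q : ℍ[ℝ], qeval ((l.map fun α => X - C α).prod) q = 0 →
        ∃ α ∈ l, q ∈ conjClass α := by
  induction l with
  | nil => exact absurd rfl hl
  | cons a t ih =>
      have hprod : ((a :: t).map fun α => X - C α).prod
          = (X - C a) * ((t.map fun α => X - C α).prod) := by
        simp
      constructor
      · rw [hprod]
        apply qeval_mul_of_zero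
        rw [List.head_cons, qeval_X_sub_C, sub_self]
      · intro q hq
        rw [hprod] at hq
        by_cases h1 : qeval (X - C a) q = 0
        · refine ⟨a, List.mem_cons_self, 1, one_ne_zero, ?_⟩
          rw [qeval_X_sub_C, sub_eq_zero] at h1
          simp [h1]
        · rw [qeval_mul_of_ne_zero _ _ _ h1] at hq
          have h2 : qeval ((t.map fun α => X - C α).prod)
              ((qeval (X - C a) q)⁻¹ * q * qeval (X - C a) q) = 0 := by
            rcases mul_eq_zero.mp hq with h | h
            · exact absurd h h1
            · exact h
          have htne : t ≠ [] := by
            rintro rfl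
            simp [qeval_one] at h2
          obtain ⟨β, hβ, r, hr, hconj⟩ := (ih htne).2 _ h2
          set p := qeval (X - C a) q with hp
          refine ⟨β, List.mem_cons_of_mem a hβ, r * p⁻¹,
            mul_ne_zero hr (inv_ne_zero h1), ?_⟩
          have hq' : q = p * (r⁻¹ * β * r) * p⁻¹ := by
            rw [← hconj]
            simp only [mul_assoc, mul_inv_cancel₀ h1, mul_one, mul_inv_cancel_left₀ h1]
          rw [hq', mul_inv_rev, inv_inv]
          simp [mul_assoc]

theorem gauss_lucas_stmt8 (l : List ℍ[ℝ]) (hl : l ≠ []) (P : Polynomial ℍ[ℝ])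
    (hP : P = (l.map fun α => X - C α).prod) :
    qeval P (l.head hl) = 0 ∧
      ∀ q : ℍ[ℝ], qeval P q = 0 → ∃ α ∈ l, q ∈ conjClass α := by
  subst hP
  exact gauss_lucas_main l hl
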